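/- arXiv:2210.10297 — 8 statements merged into one kernel-verified Lean document; each statement's English description precedes it below -/
import Mathlib

section
/- Let V ∈ ℝ^{n×k} (n ≥ k) have columns of unit 2-norm, and let ν = ‖SUT(I_k − VᵀV)‖₂ where SUT denotes the strictly upper triangular part. Then the largest singular value of V satisfies σ₁(V) ≤ 1 + ν. -/
open scoped Matrix.Norms.L2Operator
open Matrix

/-- The strictly upper triangular part of a square matrix. -/
def SUT {k : ℕ} (M : Matrix (Fin k) (Fin k) ℝ) : Matrix (Fin k) (Fin k) ℝ :=
  Matrix.of fun i j => if i < j then M i j else 0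

/-- If `V ∈ ℝ^{n×k}` (`n ≥ k`) has unit 2-norm columns and
`ν = ‖SUT(I − VᵀV)‖₂`, then the largest singular value of `V`
(i.e. its spectral norm) satisfies `σ₁(V) ≤ 1 + ν`. -/
theorem stmt0 {n k : ℕ} (hnk : k ≤ n) (V : Matrix (Fin n) (Fin k) ℝ)
    (hcols : ∀ j, ∑ i, (V i j) ^ 2 = 1)
    (ν : ℝ) (hν : ν = ‖SUT (1 - Vᵀ * V)‖) :
    ‖V‖ ≤ 1 + ν := by
  set S : Matrix (Fin k) (Fin k) ℝ := SUT (1 - Vᵀ * V) with hS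
  have hdiag : ∀ i, (Vᵀ * V) i i = 1 := by
    intro i
    simpa [Matrix.mul_apply, pow_two] using hcols i
  have hsymm : ∀ i j, (Vᵀ * V) i j = (Vᵀ * V) j i := by
    intro i j
    simp [Matrix.mul_apply, mul_comm]
  have hdecomp : Vᵀ * V = 1 - S - Sᵀ := by
    ext i j
    simp only [Matrix.sub_apply, Matrix.transpose_apply, hS, SUT, Matrix.of_apply,
      Matrix.sub_apply, Matrix.one_apply]
    rcases lt_trichotomy i j with h | h | h
    · simp [h, h.ne, not_lt.mpr h.le]
    · subst h
      simp [hdiag i]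
    · simp [h, h.ne, h.ne', not_lt.mpr h.le, hsymm i j]
  have hVt : Vᴴ = Vᵀ := Matrix.conjTranspose_eq_transpose_of_trivial V
  have hsq : ‖V‖ * ‖V‖ = ‖Vᵀ * V‖ := by
    rw [← hVt, Matrix.l2_opNorm_conjTranspose_mul_self]
  have hST : ‖Sᵀ‖ = ‖S‖ := by
    rw [← Matrix.conjTranspose_eq_transpose_of_trivial S, Matrix.l2_opNorm_conjTranspose]
  have hone : ‖(1 : Matrix (Fin k) (Fin k) ℝ)‖ ≤ 1 := by
    rw [Matrix.cstar_norm_def, _root_.map_one]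
    exact ContinuousLinearMap.norm_id_le
  have hbound : ‖Vᵀ * V‖ ≤ 1 + 2 * ν := by
    calc ‖Vᵀ * V‖ = ‖(1 : Matrix (Fin k) (Fin k) ℝ) - S - Sᵀ‖ := by rw [hdecomp]
    _ ≤ ‖(1 : Matrix (Fin k) (Fin k) ℝ) - S‖ + ‖Sᵀ‖ := norm_sub_le _ _
    _ ≤ ‖(1 : Matrix (Fin k) (Fin k) ℝ)‖ + ‖S‖ + ‖Sᵀ‖ := by
        gcongr; exact norm_sub_le _ _
    _ ≤ 1 + ν + ν := by rw [hST]; gcongr <;> rw [hν]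
    _ = 1 + 2 * ν := by ring
  have hν0 : 0 ≤ ν := hν ▸ norm_nonneg _
  nlinarith [norm_nonneg V, hsq ▸ hbound]
end

section
/- Let Q_l = (q₁,…,q_l) ∈ ℝ^{r×l} (r ≥ l ≥ 1) have unit-norm columns, M_l = SUT(Q_lᵀQ_l), and assume I_l + M_l is invertible with S_l = (I_l + M_l)^{-1} M_l. For j = 1,…,l define Householder matrices W_j = I_{r+l} − w_j w_jᵀ with w_j = (−e_j^{(l)}; q_j) ∈ ℝ^{r+l}. Then the product W₁⋯W_l, partitioned into blocks of sizes l and r, equals [[S_l, (I_l − S_l)Q_lᵀ], [Q_l(I_l − S_l), I_r − Q_l(I_l − S_l)Q_lᵀ]]. -/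
open scoped Matrix.Norms.L2Operator
open Matrix

/-- Auxiliary recursion for the compact WY representation `T`-factor. -/
def BPaux {l : ℕ} (A : Matrix (Fin l) (Fin l) ℝ) : ℕ → Matrix (Fin l) (Fin l) ℝ
  | 0 => 0
  | (k + 1) =>
      if h : k < l then
        BPaux A k + (1 - BPaux A k * A) * Matrix.single ⟨k, h⟩ ⟨k, h⟩ (1 : ℝ)
      else BPaux A k

lemma BPaux_row_zero {l : ℕ} (A : Matrix (Fin l) (Fin l) ℝ) :
    ∀ k (i j : Fin l), k ≤ (i : ℕ) → BPaux A k i j = 0 := by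
  intro k
  induction k with
  | zero => intro i j _; simp [BPaux]
  | succ k ih =>
    intro i j hik
    have hik' : k ≤ (i : ℕ) := Nat.le_of_succ_le hik
    by_cases h : k < l
    · simp only [BPaux, dif_pos h, Matrix.add_apply]
      rw [ih i j hik']
      have hine : i ≠ (⟨k, h⟩ : Fin l) := by
        intro he; rw [he] at hik; exact absurd hik (by simp)
      by_cases hj : j = (⟨k, h⟩ : Fin l)
      · subst hj
        rw [Matrix.mul_single_apply_same]
        have : (1 - BPaux A k * A) i (⟨k, h⟩ : Fin l) = 0 := by
          simp only [Matrix.sub_apply, Matrix.one_apply, Matrix.mul_apply]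
          rw [if_neg hine]
          have : ∀ b, BPaux A k i b * A b (⟨k, h⟩ : Fin l) = 0 := fun b => by
            rw [ih i b hik', zero_mul]
          simp [this]
        rw [this]; ring
      · rw [Matrix.mul_single_apply_of_ne _ _ _ _ _ hj]; ring
    · simp only [BPaux, dif_neg h]; exact ih i j hik'

lemma BPaux_col_zero {l : ℕ} (A : Matrix (Fin l) (Fin l) ℝ) :
    ∀ k (i j : Fin l), k ≤ (j : ℕ) → BPaux A k i j = 0 := by
  intro k
  induction k with
  | zero => intro i j _; simp [BPaux]
  | succ k ih =>
    intro i j hjk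
    have hjk' : k ≤ (j : ℕ) := Nat.le_of_succ_le hjk
    by_cases h : k < l
    · simp only [BPaux, dif_pos h, Matrix.add_apply]
      rw [ih i j hjk']
      have hjne : j ≠ (⟨k, h⟩ : Fin l) := by
        intro he; rw [he] at hjk; exact absurd hjk (by simp)
      rw [Matrix.mul_single_apply_of_ne _ _ _ _ _ hjne]; ring
    · simp only [BPaux, dif_neg h]; exact ih i j hjk'

/-- Björck–Paige structural theorem: the ordered product `W₁⋯W_l` of the
Householder reflections built from the augmented columns of `Q_l` has the
block form `[[S, (I−S)Qᵀ], [Q(I−S), I − Q(I−S)Qᵀ]]` where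
`S = (I+M)⁻¹M`, `M = SUT(QᵀQ)`. -/
theorem stmt4 {r l : ℕ} (hl : 1 ≤ l) (hrl : l ≤ r)
    (Q : Matrix (Fin r) (Fin l) ℝ) (hQ : ∀ j, ∑ i, (Q i j) ^ 2 = 1)
    (M : Matrix (Fin l) (Fin l) ℝ) (hM : M = SUT (Qᵀ * Q))
    (hinv : IsUnit (1 + M))
    (S : Matrix (Fin l) (Fin l) ℝ) (hS : S = (1 + M)⁻¹ * M)
    (w : Fin l → (Fin l ⊕ Fin r → ℝ))
    (hw : ∀ j, w j = Sum.elim (-(Pi.single j 1)) (fun i => Q i j))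
    (W : Fin l → Matrix (Fin l ⊕ Fin r) (Fin l ⊕ Fin r) ℝ)
    (hW : ∀ j, W j = 1 - Matrix.vecMulVec (w j) (w j)) :
    ((List.finRange l).map W).prod =
      Matrix.fromBlocks S ((1 - S) * Qᵀ) (Q * (1 - S)) (1 - Q * (1 - S) * Qᵀ) := by
  classical
  set A : Matrix (Fin l) (Fin l) ℝ := 1 + Qᵀ * Q with hA
  set V : Matrix (Fin l ⊕ Fin r) (Fin l) ℝ := Matrix.fromRows (-1) Q with hV
  -- M is strictly upper triangular
  have hMut : ∀ i j : Fin l, ¬ i < j → M i j = 0 := by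
    intro i j hij; rw [hM]; simp [SUT, hij]
  -- A - M vanishes strictly above the diagonal
  have hAM : ∀ i j : Fin l, i < j → (A - M) i j = 0 := by
    intro i j hij
    rw [hM]
    simp only [hA, Matrix.sub_apply, Matrix.add_apply, Matrix.one_apply, SUT, Matrix.of_apply]
    rw [if_neg (ne_of_lt hij), if_pos hij]; ring
  -- V^T V = A
  have hVtV : Vᵀ * V = A := by
    rw [hV, Matrix.transpose_fromRows, Matrix.fromCols_mul_fromRows]
    simp [hA, Matrix.transpose_neg, Matrix.transpose_one, add_comm]
  -- each reflection written with V
  have hwx : ∀ (j : Fin l) (x : Fin l ⊕ Fin r), w j x = V x j := by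
    intro j x
    rw [hw]
    cases x with
    | inl i =>
        simp [hV, Matrix.fromRows_apply_inl, Pi.single_apply, Matrix.one_apply, eq_comm]
    | inr i => simp [hV, Matrix.fromRows_apply_inr]
  have hWV : ∀ j : Fin l, W j = 1 - V * Matrix.single j j (1 : ℝ) * Vᵀ := by
    intro j
    rw [hW]
    congr 1
    ext x y
    have h1 : ∀ a, (V * Matrix.single j j (1 : ℝ)) x a
        = if a = j then V x j else 0 := by
      intro a
      rw [Matrix.mul_apply]
      by_cases ha : a = j
      · rw [if_pos ha, ha]
        rw [Finset.sum_eq_single j]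
        · simp [Matrix.single]
        · intro b _ hb; simp [Matrix.single, Ne.symm hb]
        · simp
      · rw [if_neg ha]
        apply Finset.sum_eq_zero
        intro b _
        simp [Matrix.single, Ne.symm ha]
    rw [Matrix.vecMulVec_apply, Matrix.mul_apply, Finset.sum_congr rfl
      (fun a _ => by rw [h1 a]), hwx, hwx]
    simp [Finset.sum_ite_eq]
  -- invariant (b): BPaux A k is a partial left inverse of (1+M)
  have key : ∀ k, k ≤ l → ∀ i j : Fin l, (j : ℕ) < k →
      (BPaux A k * (1 + M)) i j = (1 : Matrix (Fin l) (Fin l) ℝ) i j := by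
    intro k
    induction k with
    | zero => intro _ i j hj; exact absurd hj (Nat.not_lt_zero _)
    | succ k ih =>
      intro hkl i j hj
      have h : k < l := Nat.lt_of_succ_le hkl
      simp only [BPaux, dif_pos h, Matrix.add_mul, Matrix.add_apply]
      by_cases hjcase : (j : ℕ) < k
      · -- old columns
        rw [ih (Nat.le_of_succ_le hkl) i j hjcase]
        have hz : ((1 - BPaux A k * A) * Matrix.single (⟨k, h⟩ : Fin l) (⟨k, h⟩ : Fin l) (1 : ℝ)
            * (1 + M)) i j = 0 := by
          rw [Matrix.mul_apply]
          apply Finset.sum_eq_zero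
          intro b _
          by_cases hb : b = (⟨k, h⟩ : Fin l)
          · subst hb
            have : (1 + M) (⟨k, h⟩ : Fin l) j = 0 := by
              simp only [Matrix.add_apply, Matrix.one_apply]
              rw [if_neg, hMut (⟨k, h⟩ : Fin l) j, add_zero]
              · intro hlt
                exact absurd (Fin.lt_iff_val_lt_val.mp hlt) (Nat.not_lt.mpr (le_of_lt hjcase))
              · intro he
                have : (j : ℕ) = k := by rw [← he]
                omega
            rw [this, mul_zero]
          · rw [Matrix.mul_single_apply_of_ne _ _ _ _ _ hb, zero_mul]
        rw [hz]; ring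
      · -- new column j = ⟨k, h⟩
        have hjeq : j = (⟨k, h⟩ : Fin l) := by
          apply Fin.ext
          show (j : ℕ) = k
          omega
        subst hjeq
        -- first summand: (BPaux A k * (1+M)) i j = (BPaux A k * M) i j
        have h1 : (BPaux A k * (1 + M)) i ⟨k, h⟩ = (BPaux A k * M) i ⟨k, h⟩ := by
          simp only [Matrix.mul_add, Matrix.mul_one, Matrix.add_apply]
          rw [BPaux_col_zero A k i ⟨k, h⟩ (le_refl k)]
          ring
        -- second summand
        have h2 : ((1 - BPaux A k * A) * Matrix.single (⟨k, h⟩ : Fin l) (⟨k, h⟩ : Fin l) (1 : ℝ)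
            * (1 + M)) i ⟨k, h⟩ = (1 - BPaux A k * A) i ⟨k, h⟩ := by
          rw [Matrix.mul_apply]
          rw [Finset.sum_eq_single (⟨k, h⟩ : Fin l)]
          · rw [Matrix.mul_single_apply_same]
            have hd : (1 + M) (⟨k, h⟩ : Fin l) ⟨k, h⟩ = 1 := by
              simp only [Matrix.add_apply, Matrix.one_apply_eq]
              rw [hMut _ _ (lt_irrefl _)]; ring
            rw [hd, mul_one, mul_one]
          · intro b _ hb
            rw [Matrix.mul_single_apply_of_ne _ _ _ _ _ hb, zero_mul]
          · simp
        rw [h1, h2]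
        -- combine using G (A - M) column k = 0
        have hGAM : (BPaux A k * (A - M)) i ⟨k, h⟩ = 0 := by
          rw [Matrix.mul_apply]
          apply Finset.sum_eq_zero
          intro b _
          by_cases hb : (b : ℕ) < k
          · have hbj : b < (⟨k, h⟩ : Fin l) := by
              rw [Fin.lt_iff_val_lt_val]; exact hb
            rw [hAM b ⟨k, h⟩ hbj, mul_zero]
          · rw [BPaux_col_zero A k i b (Nat.not_lt.mp hb), zero_mul]
        simp only [Matrix.mul_sub, Matrix.sub_apply] at hGAM
        simp only [Matrix.sub_apply]
        have hone : (1 : Matrix (Fin l) (Fin l) ℝ) i ⟨k, h⟩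
            = (1 : Matrix (Fin l) (Fin l) ℝ) i ⟨k, h⟩ := rfl
        linarith
  -- invariant (c): partial products
  have prodlem : ∀ k, k ≤ l →
      ((((List.finRange l).take k).map W).prod : Matrix (Fin l ⊕ Fin r) (Fin l ⊕ Fin r) ℝ)
        = 1 - V * BPaux A k * Vᵀ := by
    intro k
    induction k with
    | zero => intro _; simp [BPaux]
    | succ k ih =>
      intro hkl
      have h : k < l := Nat.lt_of_succ_le hkl
      have hlen : k < (List.finRange l).length := by simpa using h
      have htake : (List.finRange l).take (k + 1)
          = (List.finRange l).take k ++ [(⟨k, h⟩ : Fin l)] := by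
        rw [List.take_succ]
        congr 1
        rw [List.getElem?_eq_getElem hlen]
        simp [Option.toList]
      rw [htake, List.map_append, List.prod_append, ih (Nat.le_of_succ_le hkl)]
      simp only [List.map_cons, List.map_nil, List.prod_cons, List.prod_nil, mul_one]
      rw [hWV]
      simp only [BPaux, dif_pos h]
      have hassoc : (V * BPaux A k * Vᵀ) *
          (V * Matrix.single (⟨k, h⟩ : Fin l) (⟨k, h⟩ : Fin l) (1 : ℝ) * Vᵀ)
          = V * (BPaux A k * A * Matrix.single (⟨k, h⟩ : Fin l) (⟨k, h⟩ : Fin l) (1 : ℝ))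
            * Vᵀ := by
        rw [← hVtV]
        simp only [Matrix.mul_assoc]
      rw [mul_sub, sub_mul, sub_mul, mul_one, one_mul, hassoc]
      simp only [Matrix.add_mul, Matrix.mul_add, Matrix.sub_mul, Matrix.mul_sub,
        Matrix.mul_one, Matrix.one_mul, Matrix.mul_assoc]
      abel
  -- evaluate at k = l
  have hfull : (((List.finRange l).map W).prod : Matrix (Fin l ⊕ Fin r) (Fin l ⊕ Fin r) ℝ)
      = 1 - V * BPaux A l * Vᵀ := by
    have hT : (List.finRange l).take l = List.finRange l :=
      List.take_of_length_le (by simp)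
    have := prodlem l le_rfl
    rwa [hT] at this
  have hGinv : BPaux A l * (1 + M) = 1 := by
    ext i j
    exact key l le_rfl i j j.isLt
  have hN : BPaux A l = (1 + M)⁻¹ := (Matrix.inv_eq_left_inv hGinv).symm
  have h2 : BPaux A l + BPaux A l * M = 1 := by
    calc BPaux A l + BPaux A l * M = BPaux A l * (1 + M) := by
          rw [Matrix.mul_add, Matrix.mul_one]
      _ = 1 := hGinv
  have hNS : (1 : Matrix (Fin l) (Fin l) ℝ) - S = BPaux A l := by
    rw [hS, ← hN]
    have : BPaux A l * M = 1 - BPaux A l := eq_sub_of_add_eq' h2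
    rw [this]
    noncomm_ring
  rw [hfull, ← hNS]
  -- block computation
  rw [hV, Matrix.transpose_fromRows, Matrix.fromRows_mul, Matrix.fromRows_mul_fromCols]
  have h11 : (-1 : Matrix (Fin l) (Fin l) ℝ) * (1 - S) * (-1 : Matrix (Fin l) (Fin l) ℝ)ᵀ
      = 1 - S := by
    rw [Matrix.transpose_neg, Matrix.transpose_one, Matrix.neg_mul, Matrix.one_mul,
      Matrix.mul_neg, Matrix.mul_one, neg_neg]
  have h12 : (-1 : Matrix (Fin l) (Fin l) ℝ) * (1 - S) * Qᵀ = -((1 - S) * Qᵀ) := by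
    rw [Matrix.neg_mul, Matrix.one_mul, Matrix.neg_mul]
  have h21 : Q * (1 - S) * (-1 : Matrix (Fin l) (Fin l) ℝ)ᵀ = -(Q * (1 - S)) := by
    rw [Matrix.transpose_neg, Matrix.transpose_one, Matrix.mul_neg, Matrix.mul_one]
  rw [h11, h12, h21]
  rw [show (1 : Matrix (Fin l ⊕ Fin r) (Fin l ⊕ Fin r) ℝ)
      = Matrix.fromBlocks 1 0 0 1 from Matrix.fromBlocks_one.symm]
  rw [sub_eq_add_neg, Matrix.fromBlocks_neg, Matrix.fromBlocks_add]
  congr 1 <;> simp [sub_eq_add_neg]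
end

section
/- With the notation of the Björck–Paige structural theorem, let M_l = SUT(Q_lᵀQ_lᵀ) be the strictly upper triangular part of Q_lᵀQ_l (where Q_l has unit columns) and S_l = (I + M_l)^{-1} M_l. Then ‖S_l‖₂ ≤ 1 and ‖M_l‖₂/(1 + ‖M_l‖₂) ≤ ‖S_l‖₂ ≤ 2‖M_l‖₂. -/
open scoped Matrix.Norms.L2Operator
open Matrix

/-- For `M = SUT(QᵀQ)` (Q with unit columns) and `S = (I+M)⁻¹M`, one has
`‖S‖₂ ≤ 1` and `‖M‖₂/(1+‖M‖₂) ≤ ‖S‖₂ ≤ 2‖M‖₂`. -/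
theorem stmt5 {r l : ℕ} (hl : 1 ≤ l) (hrl : l ≤ r)
    (Q : Matrix (Fin r) (Fin l) ℝ) (hQ : ∀ j, ∑ i, (Q i j) ^ 2 = 1)
    (M : Matrix (Fin l) (Fin l) ℝ) (hM : M = SUT (Qᵀ * Q))
    (S : Matrix (Fin l) (Fin l) ℝ) (hS : S = (1 + M)⁻¹ * M) :
    ‖S‖ ≤ 1 ∧ ‖M‖ / (1 + ‖M‖) ≤ ‖S‖ ∧ ‖S‖ ≤ 2 * ‖M‖ := by
  -- M is strictly upper triangular
  have hMz : ∀ i j : Fin l, j ≤ i → M i j = 0 := by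
    intro i j hij
    simp [hM, SUT, not_lt.mpr hij]
  -- 1 + M is upper triangular with unit diagonal
  have hBT : (1 + M).BlockTriangular id := by
    intro i j hij
    simp only [Matrix.add_apply, Matrix.one_apply, hMz i j (le_of_lt hij)]
    rw [if_neg (by exact fun h => absurd h (ne_of_gt hij))]
    ring
  have hdet : (1 + M).det = 1 := by
    rw [Matrix.det_of_upperTriangular hBT]
    have : ∀ i : Fin l, (1 + M) i i = 1 := by
      intro i; simp [Matrix.add_apply, Matrix.one_apply, hMz i i le_rfl]
    simp [this]
  have hu : IsUnit (1 + M).det := by rw [hdet]; exact isUnit_one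
  have hinv1 : (1 + M) * (1 + M)⁻¹ = 1 := Matrix.mul_nonsing_inv _ hu
  have hinv2 : (1 + M)⁻¹ * (1 + M) = 1 := Matrix.nonsing_inv_mul _ hu
  -- identities
  have hMS : (1 + M) * S = M := by
    rw [hS, ← Matrix.mul_assoc, hinv1, Matrix.one_mul]
  have hSM : S * (1 + M) = M := by
    rw [hS, Matrix.mul_assoc]
    have : M * (1 + M) = (1 + M) * M := by rw [mul_add, add_mul, mul_one, one_mul]
    rw [this, ← Matrix.mul_assoc, hinv2, Matrix.one_mul]
  have hSalt : S = M * (1 + M)⁻¹ := by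
    calc S = (S * (1 + M)) * (1 + M)⁻¹ := by rw [Matrix.mul_assoc, hinv1, Matrix.mul_one]
    _ = M * (1 + M)⁻¹ := by rw [hSM]
  -- 1 + M + Mᵀ = QᵀQ
  have hA : (1 : Matrix (Fin l) (Fin l) ℝ) + M + Mᵀ = Qᵀ * Q := by
    ext i j
    have hsym : (Qᵀ * Q) i j = (Qᵀ * Q) j i := by
      simp [Matrix.mul_apply, mul_comm]
    rcases lt_trichotomy i j with h | h | h
    · simp [hM, SUT, Matrix.add_apply, Matrix.one_apply, Matrix.transpose_apply, h,
        ne_of_lt h, not_lt.mpr (le_of_lt h)]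
    · subst h
      have : (Qᵀ * Q) i i = 1 := by
        rw [Matrix.mul_apply]
        simpa [pow_two] using hQ i
      simp [hM, SUT, Matrix.add_apply, Matrix.one_apply, Matrix.transpose_apply, this]
    · rw [hsym]
      simp [hM, SUT, Matrix.add_apply, Matrix.one_apply, Matrix.transpose_apply, h,
        (ne_of_gt h), not_lt.mpr (le_of_lt h)]
  -- key quadratic inequality
  have key : ∀ v : Fin l → ℝ, (M *ᵥ v) ⬝ᵥ (M *ᵥ v) ≤ ((1 + M) *ᵥ v) ⬝ᵥ ((1 + M) *ᵥ v) := by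
    intro v
    have h1 : v ⬝ᵥ ((1 + M + Mᵀ) *ᵥ v) = (Q *ᵥ v) ⬝ᵥ (Q *ᵥ v) := by
      rw [hA, ← Matrix.mulVec_mulVec, Matrix.dotProduct_mulVec, Matrix.vecMul_transpose]
    have h2 : v ⬝ᵥ (Mᵀ *ᵥ v) = v ⬝ᵥ (M *ᵥ v) := by
      rw [Matrix.mulVec_transpose, dotProduct_comm, ← Matrix.dotProduct_mulVec]
    have h3 : ((1 + M) *ᵥ v) ⬝ᵥ ((1 + M) *ᵥ v) - (M *ᵥ v) ⬝ᵥ (M *ᵥ v)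
        = v ⬝ᵥ ((1 + M + Mᵀ) *ᵥ v) := by
      simp only [Matrix.add_mulVec, Matrix.one_mulVec, dotProduct_add,
        add_dotProduct, h2]
      have h4 : (M *ᵥ v) ⬝ᵥ v = v ⬝ᵥ (M *ᵥ v) := dotProduct_comm _ _
      rw [h4]; ring
    have h5 : 0 ≤ (Q *ᵥ v) ⬝ᵥ (Q *ᵥ v) :=
      Finset.sum_nonneg fun i _ => mul_self_nonneg _
    nlinarith [h3, h1, h5]
  -- pointwise application of toEuclideanCLM is mulVec
  have happ : ∀ (A : Matrix (Fin l) (Fin l) ℝ) (x : EuclideanSpace ℝ (Fin l)) (i : Fin l),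
      (toEuclideanCLM (n := Fin l) (𝕜 := ℝ) A x) i = (A *ᵥ (fun j => x j)) i :=
    fun _ _ _ => rfl
  have hle : ∀ u : EuclideanSpace ℝ (Fin l),
      ‖toEuclideanCLM (n := Fin l) (𝕜 := ℝ) M u‖ ≤
        ‖toEuclideanCLM (n := Fin l) (𝕜 := ℝ) (1 + M) u‖ := by
    intro u
    rw [EuclideanSpace.norm_eq, EuclideanSpace.norm_eq]
    apply Real.sqrt_le_sqrt
    have hk := key (fun j => u j)
    simpa [happ, Real.norm_eq_abs, sq_abs, dotProduct, pow_two,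
      Matrix.add_mulVec, Matrix.one_mulVec, Pi.add_apply] using hk
  have hS1 : ‖S‖ ≤ 1 := by
    rw [Matrix.cstar_norm_def]
    refine ContinuousLinearMap.opNorm_le_bound _ zero_le_one fun x => ?_
    set u := toEuclideanCLM (n := Fin l) (𝕜 := ℝ) (1 + M)⁻¹ x with hu
    have hx : toEuclideanCLM (n := Fin l) (𝕜 := ℝ) (1 + M) u = x := by
      have h := congrArg (fun A => toEuclideanCLM (n := Fin l) (𝕜 := ℝ) A x) hinv1
      simpa [_root_.map_mul, ContinuousLinearMap.mul_apply, hu] using h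
    have hSx : toEuclideanCLM (n := Fin l) (𝕜 := ℝ) S x
        = toEuclideanCLM (n := Fin l) (𝕜 := ℝ) M u := by
      rw [hSalt]
      simp [_root_.map_mul, ContinuousLinearMap.mul_apply, hu]
    rw [hSx, one_mul, ← hx]
    exact hle u
  have hnM : (0:ℝ) ≤ ‖M‖ := norm_nonneg M
  have hnS : (0:ℝ) ≤ ‖S‖ := norm_nonneg S
  have hMeq : M = S + S * M := by
    conv_lhs => rw [← hSM]
    rw [mul_add, mul_one]
  have hlow : ‖M‖ ≤ ‖S‖ + ‖S‖ * ‖M‖ := by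
    calc ‖M‖ = ‖S + S * M‖ := congrArg norm hMeq
      _ ≤ ‖S‖ + ‖S * M‖ := norm_add_le _ _
      _ ≤ ‖S‖ + ‖S‖ * ‖M‖ := by gcongr; exact norm_mul_le _ _
  have hSeq : S = M - M * S := by
    have h := hMS
    rw [add_mul, one_mul] at h
    exact eq_sub_iff_add_eq.mpr h
  have hup : ‖S‖ ≤ ‖M‖ + ‖M‖ * ‖S‖ := by
    calc ‖S‖ = ‖M - M * S‖ := congrArg norm hSeq
      _ ≤ ‖M‖ + ‖M * S‖ := norm_sub_le _ _
      _ ≤ ‖M‖ + ‖M‖ * ‖S‖ := by gcongr; exact norm_mul_le _ _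
  refine ⟨hS1, ?_, ?_⟩
  · rw [div_le_iff₀ (by linarith)]
    nlinarith
  · nlinarith
end

section
/- Let C ∈ ℝ^{r×l}, r ≥ l, have full column rank with compact QR factorization C = QR produced by Gram–Schmidt, where Q = (q₁,…,q_l) has orthonormal columns and R is upper triangular with positive diagonal. Define Householder reflections W_j = I_{r+l} − w_j w_jᵀ with w_j = (−e_j^{(l)}; q_j). Then (W_l⋯W₁) · [[O_{l×l}],[C]] = [[R],[O_{r×l}]]. -/
open Matrix

/-- Equivalence of Gram–Schmidt QR of `C` and Householder QR of the augmented
matrix `(O; C)`: with `W_j = I − w_jw_jᵀ`, `w_j = (−e_j; q_j)`, one has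
`(W_l⋯W₁)·[[0],[C]] = [[R],[0]]`. -/
theorem stmt6 {r l : ℕ} (hrl : l ≤ r)
    (C Q : Matrix (Fin r) (Fin l) ℝ) (hQ : Qᵀ * Q = 1)
    (R : Matrix (Fin l) (Fin l) ℝ)
    (hR : ∀ i j : Fin l, j < i → R i j = 0) (hRd : ∀ i, 0 < R i i)
    (hQR : C = Q * R)
    (w : Fin l → (Fin l ⊕ Fin r → ℝ))
    (hw : ∀ j, w j = Sum.elim (-(Pi.single j 1)) (fun i => Q i j))
    (W : Fin l → Matrix (Fin l ⊕ Fin r) (Fin l ⊕ Fin r) ℝ)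
    (hW : ∀ j, W j = 1 - Matrix.vecMulVec (w j) (w j)) :
    ((List.finRange l).reverse.map W).prod *
        Matrix.fromRows (0 : Matrix (Fin l) (Fin l) ℝ) C =
      Matrix.fromRows R (0 : Matrix (Fin r) (Fin l) ℝ) := by
  have hQC : Qᵀ * C = R := by rw [hQR, ← Matrix.mul_assoc, hQ, one_mul]
  have key : ∀ k, k ≤ l →
      (((List.finRange l).take k).reverse.map W).prod *
        Matrix.fromRows (0 : Matrix (Fin l) (Fin l) ℝ) C =
      Matrix.fromRows (Matrix.of fun (i j : Fin l) => if (i : ℕ) < k then R i j else 0)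
        (Matrix.of fun (i : Fin r) (j : Fin l) => C i j - ∑ t : Fin l, if (t : ℕ) < k then Q i t * R t j else 0) := by
    intro k
    induction k with
    | zero =>
      intro _
      simp only [List.take_zero, List.reverse_nil, List.map_nil, List.prod_nil, one_mul]
      ext x y
      cases x <;> simp
    | succ k ih =>
      intro hk1
      have hk : k < l := hk1
      set j : Fin l := ⟨k, hk⟩ with hjdef
      have htake : (List.finRange l).take (k+1) = (List.finRange l).take k ++ [j] := by
        rw [List.take_succ]
        congr 1
        rw [List.getElem?_eq_getElem (by simpa using hk)]
        simp [List.getElem_finRange, hjdef, Fin.cast]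
      rw [htake, List.reverse_append, List.map_append, List.prod_append]
      simp only [List.reverse_singleton, List.map_cons, List.map_nil, List.prod_cons,
        List.prod_nil, mul_one]
      rw [Matrix.mul_assoc, ih (le_of_lt hk)]
      -- now show W j * M_k = M_{k+1}
      set topk : Matrix (Fin l) (Fin l) ℝ :=
        Matrix.of fun (i j' : Fin l) => if (i : ℕ) < k then R i j' else 0 with htopk
      set botk : Matrix (Fin r) (Fin l) ℝ :=
        Matrix.of fun (i : Fin r) (j' : Fin l) => C i j' - ∑ t : Fin l, if (t : ℕ) < k then Q i t * R t j' else 0 with hbotk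
      have hQQ : ∀ t : Fin l, ∑ i, Q i j * Q i t = if j = t then 1 else 0 := by
        intro t
        have := congrFun (congrFun hQ j) t
        simpa [Matrix.mul_apply, Matrix.one_apply] using this
      have hQCy : ∀ y : Fin l, ∑ i, Q i j * C i y = R j y := by
        intro y
        have := congrFun (congrFun hQC j) y
        simpa [Matrix.mul_apply] using this
      have hdot : ∀ y : Fin l,
          ∑ z, w j z * (Matrix.fromRows topk botk) z y = R j y := by
        intro y
        rw [Fintype.sum_sum_type]
        have h1 : ∑ i : Fin l, w j (Sum.inl i) * (Matrix.fromRows topk botk) (Sum.inl i) y = 0 := by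
          simp only [hw, Sum.elim_inl, Matrix.fromRows_apply_inl, Pi.neg_apply,
            Pi.single_apply, neg_mul, ite_mul, one_mul, zero_mul]
          simp [htopk]
          intro h; simp [hjdef] at h
        have h2 : ∑ i : Fin r, w j (Sum.inr i) * (Matrix.fromRows topk botk) (Sum.inr i) y
            = R j y := by
          simp only [hw, Sum.elim_inr, Matrix.fromRows_apply_inr, hbotk, Matrix.of_apply,
            mul_sub, Finset.sum_sub_distrib]
          rw [hQCy]
          simp only [Finset.mul_sum]
          have : ∑ i : Fin r, ∑ t : Fin l, Q i j * (if (t : ℕ) < k then Q i t * R t y else 0)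
              = ∑ t : Fin l, if (t : ℕ) < k then (∑ i, Q i j * Q i t) * R t y else 0 := by
            rw [Finset.sum_comm]
            refine Finset.sum_congr rfl fun t _ => ?_
            by_cases h : (t : ℕ) < k <;> simp [h, Finset.sum_mul, mul_assoc]
          rw [this]
          have hz : ∀ t : Fin l, (if (t : ℕ) < k then (∑ i, Q i j * Q i t) * R t y else 0) = 0 := by
            intro t
            by_cases h : (t : ℕ) < k
            · rw [if_pos h, hQQ]
              have : j ≠ t := by
                intro he; rw [← he] at h; simp [hjdef] at h
              simp [this]
            · rw [if_neg h]
          simp [hz]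
        rw [h1, h2, zero_add]
      have hmul : W j * Matrix.fromRows topk botk =
          Matrix.fromRows (Matrix.of fun (i j' : Fin l) => if (i : ℕ) < k + 1 then R i j' else 0)
            (Matrix.of fun (i : Fin r) (j' : Fin l) => C i j' - ∑ t : Fin l, if (t : ℕ) < k + 1 then Q i t * R t j' else 0) := by
        ext x y
        rw [hW, Matrix.sub_mul, Matrix.one_mul, Matrix.sub_apply]
        have hv : (Matrix.vecMulVec (w j) (w j) * Matrix.fromRows topk botk) x y
            = w j x * R j y := by
          rw [Matrix.mul_apply]
          simp only [Matrix.vecMulVec_apply]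
          rw [← hdot y, Finset.mul_sum]
          exact Finset.sum_congr rfl fun z _ => by ring
        rw [hv]
        cases x with
        | inl x =>
          simp only [Matrix.fromRows_apply_inl, htopk, Matrix.of_apply, hw, Sum.elim_inl,
            Pi.neg_apply, Pi.single_apply]
          rcases lt_trichotomy (x : ℕ) k with h | h | h
          · have hxj : x ≠ j := by intro he; rw [he] at h; simp [hjdef] at h
            simp [h, Nat.lt_succ_of_lt h, hxj]
          · have hxj : x = j := by ext; simpa [hjdef] using h
            simp [hxj, hjdef, h]
          · have hxj : x ≠ j := by intro he; rw [he] at h; simp [hjdef] at h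
            have h1 : ¬ (x : ℕ) < k := by omega
            have h2 : ¬ (x : ℕ) < k + 1 := by omega
            simp [h1, h2, hxj]
        | inr x =>
          simp only [Matrix.fromRows_apply_inr, htopk, hbotk, Matrix.of_apply, hw, Sum.elim_inr]
          have hsplit : ∑ t : Fin l, (if (t : ℕ) < k + 1 then Q x t * R t y else 0)
              = (∑ t : Fin l, if (t : ℕ) < k then Q x t * R t y else 0) + Q x j * R j y := by
            have : ∀ t : Fin l, (if (t : ℕ) < k + 1 then Q x t * R t y else 0)
                = (if (t : ℕ) < k then Q x t * R t y else 0)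
                  + (if t = j then Q x t * R t y else 0) := by
              intro t
              rcases lt_trichotomy (t : ℕ) k with h | h | h
              · have : t ≠ j := by intro he; rw [he] at h; simp [hjdef] at h
                simp [h, Nat.lt_succ_of_lt h, this]
              · have : t = j := by ext; simpa [hjdef] using h
                simp [this, hjdef, h]
              · have h1 : ¬ (t : ℕ) < k := by omega
                have h2 : ¬ (t : ℕ) < k + 1 := by omega
                have : t ≠ j := by intro he; rw [he] at h; simp [hjdef] at h
                simp [h1, h2, this]
            rw [Finset.sum_congr rfl fun t _ => this t, Finset.sum_add_distrib,
              Finset.sum_ite_eq' Finset.univ j (fun t => Q x t * R t y)]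
            simp
          rw [hsplit]
          ring
      rw [hmul]
  have := key l le_rfl
  rw [List.take_of_length_le (by simp)] at this
  have htop : (Matrix.of fun (i j' : Fin l) => if (i : ℕ) < l then R i j' else 0) = R := by
    ext i j'; simp [i.isLt]
  have hbot : (Matrix.of fun (i : Fin r) (j' : Fin l) =>
      C i j' - ∑ t : Fin l, if (t : ℕ) < l then Q i t * R t j' else 0)
      = (0 : Matrix (Fin r) (Fin l) ℝ) := by
    ext i j'
    have hC : C i j' = ∑ t : Fin l, Q i t * R t j' := by rw [hQR]; rfl
    simp [hC, fun t : Fin l => t.isLt]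
  rw [htop, hbot] at this
  exact this
end

section
/- Let the exact k-step Lanczos bidiagonalization of A with starting vector b produce orthonormal U_{k+1} = (u₁,…,u_{k+1}), V_k, and lower bidiagonal B_k ∈ ℝ^{(k+1)×k}. Define Householder reflections P̂_i = I_{m+n+1} − p̂_i p̂_iᵀ with p̂_i = (−e_i^{(n+1)}; u_i) ∈ ℝ^{m+n+1}, i = 1,…,k+1. Then (stacking a zero block of n+1 rows on top of AV_k) it holds that [[O_{(n+1)×k}],[AV_k]] = P̂₁⋯P̂_{k+1} [[B_k],[O_{(m+n−k)×k}]]. -/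
open Matrix

/-- Exact-arithmetic Lanczos bidiagonalization as Householder transformations:
`[[0],[AV_k]] = P̂₁⋯P̂_{k+1}·[[B_k],[0]]` where `P̂_i = I − p̂_ip̂_iᵀ`,
`p̂_i = (−e_i^{(n+1)}; u_i)`, `V_k` and `B_k` are the leading `k` columns of
`V_n` and `B_n`. -/
theorem stmt9 {m n k : ℕ} (hmn : n < m) (hk : k ≤ n)
    (A : Matrix (Fin m) (Fin n) ℝ) (b : Fin m → ℝ) (β₁ : ℝ) (hβ : 0 < β₁)
    (U : Matrix (Fin m) (Fin (n + 1)) ℝ) (hU : Uᵀ * U = 1)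
    (hb : b = β₁ • fun i => U i 0)
    (V : Matrix (Fin n) (Fin n) ℝ)
    (B : Matrix (Fin (n + 1)) (Fin n) ℝ)
    (hB : ∀ (i : Fin (n + 1)) (j : Fin n), (i : ℕ) ≠ (j : ℕ) → (i : ℕ) ≠ (j : ℕ) + 1 → B i j = 0)
    (hAV : A * V = U * B)
    (p : Fin (n + 1) → (Fin (n + 1) ⊕ Fin m → ℝ))
    (hp : ∀ i, p i = Sum.elim (-(Pi.single i 1)) (fun r => U r i))
    (P : Fin (n + 1) → Matrix (Fin (n + 1) ⊕ Fin m) (Fin (n + 1) ⊕ Fin m) ℝ)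
    (hP : ∀ i, P i = 1 - Matrix.vecMulVec (p i) (p i)) :
    Matrix.fromRows (0 : Matrix (Fin (n + 1)) (Fin k) ℝ)
        (A * V.submatrix id (Fin.castLE hk)) =
      ((List.finRange (k + 1)).map
          (fun j => P (Fin.castLE (by omega) j))).prod *
        Matrix.fromRows (B.submatrix id (Fin.castLE hk))
          (0 : Matrix (Fin m) (Fin k) ℝ) := by
  classical
  have orth : ∀ i j : Fin (n+1), (∑ r, U r i * U r j) = if i = j then (1:ℝ) else 0 := by
    intro i j
    have h := congrFun (congrFun hU i) j
    simpa [Matrix.mul_apply, Matrix.one_apply, Matrix.transpose_apply] using h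
  have hBzero : ∀ (i : Fin (n+1)) (c : Fin k), k < (i:ℕ) → B i (Fin.castLE hk c) = 0 := by
    intro i c hik
    have hc : (c : ℕ) < k := c.isLt
    apply hB
    · simp only [Fin.coe_castLE]; omega
    · simp only [Fin.coe_castLE]; omega
  set Y : ℕ → Matrix (Fin (n + 1) ⊕ Fin m) (Fin k) ℝ := fun t =>
    Matrix.of fun rc c => Sum.elim
      (fun i : Fin (n+1) => if (i:ℕ) < t then B i (Fin.castLE hk c) else 0)
      (fun r : Fin m => ∑ i : Fin (n+1),
        if t ≤ (i:ℕ) ∧ (i:ℕ) ≤ k then U r i * B i (Fin.castLE hk c) else 0) rc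
    with hYdef
  have step : ∀ t : ℕ, (ht : t ≤ k) → P ⟨t, by omega⟩ * Y (t+1) = Y t := by
    intro t ht
    have htn : t < n + 1 := by omega
    set i0 : Fin (n+1) := ⟨t, htn⟩ with hi0
    have hv : (i0 : ℕ) = t := rfl
    have key : ∀ c : Fin k, (∑ s, p i0 s * Y (t+1) s c) = -(B i0 (Fin.castLE hk c)) := by
      intro c
      rw [hp, Fintype.sum_sum_type]
      have h1 : (∑ i : Fin (n+1),
          Sum.elim (-(Pi.single i0 (1:ℝ))) (fun r => U r i0) (Sum.inl i) * Y (t+1) (Sum.inl i) c)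
          = -(B i0 (Fin.castLE hk c)) := by
        simp only [Sum.elim_inl, hYdef, Matrix.of_apply, Pi.neg_apply, Pi.single_apply,
          neg_mul, ite_mul, one_mul, zero_mul]
        rw [Finset.sum_neg_distrib, Finset.sum_ite_eq' Finset.univ i0]
        simp [hv]
      have h2 : (∑ r : Fin m,
          Sum.elim (-(Pi.single i0 (1:ℝ))) (fun r => U r i0) (Sum.inr r) * Y (t+1) (Sum.inr r) c)
          = 0 := by
        simp only [Sum.elim_inr, hYdef, Matrix.of_apply]
        simp_rw [Finset.mul_sum]
        rw [Finset.sum_comm]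
        refine Finset.sum_eq_zero fun i _ => ?_
        by_cases hc : t + 1 ≤ (i:ℕ) ∧ (i:ℕ) ≤ k
        · simp only [if_pos hc]
          have heq : ∀ r : Fin m, U r i0 * (U r i * B i (Fin.castLE hk c))
              = (U r i0 * U r i) * B i (Fin.castLE hk c) := fun r => by ring
          simp_rw [heq]
          rw [← Finset.sum_mul, orth, if_neg, zero_mul]
          intro h
          have : (i0 : ℕ) = (i : ℕ) := by rw [h]
          omega
        · simp only [if_neg hc, mul_zero, Finset.sum_const_zero]
      rw [h1, h2, add_zero]
    rw [hP]
    ext rc c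
    rw [Matrix.sub_mul, Matrix.one_mul, Matrix.sub_apply]
    have hvm : (Matrix.vecMulVec (p i0) (p i0) * Y (t+1)) rc c
        = p i0 rc * ∑ s, p i0 s * Y (t+1) s c := by
      rw [Matrix.mul_apply, Finset.mul_sum]
      exact Finset.sum_congr rfl fun s _ => by rw [Matrix.vecMulVec_apply]; ring
    rw [hvm, key c]
    cases rc with
    | inl i =>
      rw [hp]
      simp only [hYdef, Matrix.of_apply, Sum.elim_inl, Pi.neg_apply, Pi.single_apply]
      by_cases hii : i = i0
      · have hit : (i:ℕ) = t := by rw [hii, hv]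
        rw [if_pos hii, if_pos (by omega : (i:ℕ) < t + 1), if_neg (by omega : ¬ (i:ℕ) < t)]
        rw [hii]
        ring
      · rw [if_neg hii]
        have hne : (i:ℕ) ≠ t := by
          intro h
          exact hii (Fin.ext (by rw [h, hv]))
        by_cases hit : (i:ℕ) < t
        · rw [if_pos (by omega : (i:ℕ) < t + 1), if_pos hit]; ring
        · rw [if_neg (by omega : ¬ (i:ℕ) < t + 1), if_neg hit]; ring
    | inr r =>
      rw [hp]
      simp only [hYdef, Matrix.of_apply, Sum.elim_inr]
      rw [mul_neg, sub_neg_eq_add]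
      have hsplit : (∑ i : Fin (n+1), if t ≤ (i:ℕ) ∧ (i:ℕ) ≤ k
            then U r i * B i (Fin.castLE hk c) else 0)
          - (∑ i : Fin (n+1), if t + 1 ≤ (i:ℕ) ∧ (i:ℕ) ≤ k
            then U r i * B i (Fin.castLE hk c) else 0)
          = U r i0 * B i0 (Fin.castLE hk c) := by
        rw [← Finset.sum_sub_distrib]
        rw [Finset.sum_eq_single i0]
        · rw [if_pos ⟨by omega, by omega⟩, if_neg (by omega)]
          ring
        · intro i _ hi
          have hne : (i:ℕ) ≠ t := by
            intro h
            exact hi (Fin.ext (by rw [h, hv]))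
          by_cases hc : t ≤ (i:ℕ) ∧ (i:ℕ) ≤ k
          · rw [if_pos hc, if_pos ⟨by omega, hc.2⟩]; ring
          · rw [if_neg hc, if_neg (fun h => hc ⟨by omega, h.2⟩)]; ring
        · simp
      linarith [hsplit]
  set g : ℕ → Matrix (Fin (n + 1) ⊕ Fin m) (Fin (n + 1) ⊕ Fin m) ℝ :=
    fun j => if h : j < n + 1 then P ⟨j, h⟩ else 1 with hg
  have main : ∀ t, t ≤ k + 1 → ((List.range t).map g).prod * Y t = Y 0 := by
    intro t
    induction t with
    | zero => intro _; simp
    | succ t ih =>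
      intro ht
      rw [List.range_succ, List.map_append, List.prod_append, List.map_singleton,
        List.prod_singleton, Matrix.mul_assoc]
      have hgt : g t = P ⟨t, by omega⟩ := by rw [hg]; exact dif_pos (by omega)
      rw [hgt, step t (by omega)]
      exact ih (by omega)
  have hY0 : Matrix.fromRows (0 : Matrix (Fin (n + 1)) (Fin k) ℝ)
      (A * V.submatrix id (Fin.castLE hk)) = Y 0 := by
    ext rc c
    cases rc with
    | inl i => simp [hYdef]
    | inr r =>
      rw [Matrix.fromRows_apply_inr]
      have h1 : (A * V.submatrix id (Fin.castLE hk)) r c = (A * V) r (Fin.castLE hk c) := by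
        simp [Matrix.mul_apply]
      rw [h1, hAV, Matrix.mul_apply]
      simp only [hYdef, Matrix.of_apply, Sum.elim_inr]
      refine Finset.sum_congr rfl fun i _ => ?_
      by_cases hik : (i:ℕ) ≤ k
      · rw [if_pos ⟨Nat.zero_le _, hik⟩]
      · rw [if_neg (fun h => hik h.2), hBzero i c (by omega), mul_zero]
  have hYk : Matrix.fromRows (B.submatrix id (Fin.castLE hk))
      (0 : Matrix (Fin m) (Fin k) ℝ) = Y (k+1) := by
    ext rc c
    cases rc with
    | inl i =>
      rw [Matrix.fromRows_apply_inl]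
      simp only [hYdef, Matrix.of_apply, Sum.elim_inl, Matrix.submatrix_apply, id]
      by_cases hik : (i:ℕ) < k + 1
      · rw [if_pos hik]
      · rw [if_neg hik, hBzero i c (by omega)]
    | inr r =>
      rw [Matrix.fromRows_apply_inr]
      simp only [hYdef, Matrix.of_apply, Sum.elim_inr, Matrix.zero_apply]
      refine (Finset.sum_eq_zero fun i _ => ?_).symm
      rw [if_neg (by omega)]
  rw [hY0, hYk, ← main (k+1) le_rfl]
  congr 1
  rw [← List.map_coe_finRange_eq_range (n := k+1), List.map_map]
  congr 1
  apply List.map_congr_left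
  intro a _
  have ha : (a : ℕ) < n + 1 := by omega
  simp only [Function.comp_apply, hg]
  rw [dif_pos ha]
  rfl
end

section
/- Let P ∈ ℝ^{(n+1+m)×(n+1+m)} be orthogonal with block partition P = [[P₁₁, P₁₂],[P₂₁, P₂₂]] where P₁₁ ∈ ℝ^{(n+1)×(n+1)} and P₂₁ ∈ ℝ^{m×(n+1)}. Then P₁₁ᵀP₁₁ + P₂₁ᵀP₂₁ = I_{n+1}, and if P₂₁ = Y₁ΣZᵀ is a compact SVD (Y₁ ∈ ℝ^{m×(n+1)} orthonormal columns, Z orthogonal, Σ diagonal with entries in [0,1]), then the orthonormal matrix Ū = Y₁Zᵀ satisfies ‖Ū − P₂₁‖₂ ≤ ‖P₁₁‖₂². -/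
open scoped Matrix.Norms.L2Operator
open Matrix

private lemma aux_diag_norm_le {k : ℕ} {v : Fin k → ℝ} {c : ℝ} (hc : 0 ≤ c)
    (h : ∀ i, |v i| ≤ c) :
    ‖(Matrix.diagonal v : Matrix (Fin k) (Fin k) ℝ)‖ ≤ c := by
  rw [Matrix.l2_opNorm_def]
  refine ContinuousLinearMap.opNorm_le_bound _ hc fun x => ?_
  have hx : ‖x‖ = Real.sqrt (∑ i, ‖x i‖ ^ 2) := EuclideanSpace.norm_eq x
  have happ : ((Matrix.toEuclideanLin.trans LinearMap.toContinuousLinearMap)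
      (Matrix.diagonal v)) x = Matrix.toEuclideanLin (Matrix.diagonal v) x := rfl
  rw [happ]
  rw [EuclideanSpace.norm_eq, hx]
  have hcoord : ∀ i, (Matrix.toEuclideanLin (Matrix.diagonal v) x) i = v i * x i := by
    intro i
    rw [Matrix.toEuclideanLin_apply]
    simp [Matrix.mulVec_diagonal]
  calc Real.sqrt (∑ i, ‖(Matrix.toEuclideanLin (Matrix.diagonal v) x) i‖ ^ 2)
      ≤ Real.sqrt (∑ i, c ^ 2 * ‖x i‖ ^ 2) := by
        apply Real.sqrt_le_sqrt
        apply Finset.sum_le_sum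
        intro i _
        rw [hcoord i]
        have : ‖v i * x i‖ = |v i| * ‖x i‖ := by
          rw [Real.norm_eq_abs, Real.norm_eq_abs, abs_mul]
        rw [this, mul_pow]
        have h1 : |v i| ^ 2 ≤ c ^ 2 := by
          have := h i
          nlinarith [abs_nonneg (v i)]
        nlinarith [sq_nonneg (x i), abs_nonneg (x i)]
    _ = c * Real.sqrt (∑ i, ‖x i‖ ^ 2) := by
        rw [← Finset.mul_sum, Real.sqrt_mul (sq_nonneg c), Real.sqrt_sq hc]

private lemma aux_norm_le_one {p q : ℕ} (A : Matrix (Fin p) (Fin (q + 1)) ℝ)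
    (hA : Aᵀ * A = 1) : ‖A‖ ≤ 1 := by
  have h1 : ‖Aᴴ * A‖ = ‖A‖ * ‖A‖ := Matrix.l2_opNorm_conjTranspose_mul_self A
  have h2 : Aᴴ = Aᵀ := Matrix.conjTranspose_eq_transpose_of_trivial A
  rw [h2, hA] at h1
  haveI : Nontrivial (Matrix (Fin (q + 1)) (Fin (q + 1)) ℝ) :=
    ⟨0, 1, fun h => by simpa using congrFun (congrFun h 0) 0⟩
  have h3 : ‖(1 : Matrix (Fin (q + 1)) (Fin (q + 1)) ℝ)‖ = 1 := CStarRing.norm_one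
  rw [h3] at h1
  nlinarith [norm_nonneg A]

/-- For an orthogonal matrix `P` with blocks `P₁₁, P₂₁`, one has
`P₁₁ᵀP₁₁ + P₂₁ᵀP₂₁ = I`, and if `P₂₁ = Y₁ΣZᵀ` is a compact SVD then the
orthonormal matrix `Ū = Y₁Zᵀ` satisfies `‖Ū − P₂₁‖₂ ≤ ‖P₁₁‖₂²`. -/
theorem stmt10 {m n : ℕ} (hmn : n + 1 ≤ m)
    (P : Matrix (Fin (n + 1) ⊕ Fin m) (Fin (n + 1) ⊕ Fin m) ℝ) (hP : Pᵀ * P = 1)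
    (Y₁ : Matrix (Fin m) (Fin (n + 1)) ℝ) (hY : Y₁ᵀ * Y₁ = 1)
    (Z : Matrix (Fin (n + 1)) (Fin (n + 1)) ℝ) (hZ : Zᵀ * Z = 1)
    (σ : Fin (n + 1) → ℝ) (hσ : ∀ i, 0 ≤ σ i ∧ σ i ≤ 1)
    (hSVD : P.toBlocks₂₁ = Y₁ * Matrix.diagonal σ * Zᵀ) :
    P.toBlocks₁₁ᵀ * P.toBlocks₁₁ + P.toBlocks₂₁ᵀ * P.toBlocks₂₁ = 1 ∧
    ‖Y₁ * Zᵀ - P.toBlocks₂₁‖ ≤ ‖P.toBlocks₁₁‖ ^ 2 := by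
  have hZZt : Z * Zᵀ = 1 := mul_eq_one_comm.mp hZ
  -- Part 1
  have h1 : P.toBlocks₁₁ᵀ * P.toBlocks₁₁ + P.toBlocks₂₁ᵀ * P.toBlocks₂₁ = 1 := by
    have h := hP
    rw [← Matrix.fromBlocks_toBlocks P, Matrix.fromBlocks_transpose,
      Matrix.fromBlocks_multiply] at h
    have hone : (1 : Matrix (Fin (n + 1) ⊕ Fin m) (Fin (n + 1) ⊕ Fin m) ℝ).toBlocks₁₁ = 1 := by
      rw [← Matrix.fromBlocks_one, Matrix.toBlocks_fromBlocks₁₁]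
    have := congrArg Matrix.toBlocks₁₁ h
    rw [hone] at this
    simpa [Matrix.toBlocks_fromBlocks₁₁] using this
  refine ⟨h1, ?_⟩
  set A := P.toBlocks₁₁ with hA
  -- key matrices
  set D : Matrix (Fin (n + 1)) (Fin (n + 1)) ℝ := Matrix.diagonal (fun i => 1 - σ i) with hD
  set E : Matrix (Fin (n + 1)) (Fin (n + 1)) ℝ :=
    Matrix.diagonal (fun i => 1 - σ i ^ 2) with hE
  set F : Matrix (Fin (n + 1)) (Fin (n + 1)) ℝ :=
    Matrix.diagonal (fun i => (1 + σ i)⁻¹) with hF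
  have hDdef : D = 1 - Matrix.diagonal σ := by
    rw [hD, ← Matrix.diagonal_one, Matrix.diagonal_sub]
  -- step A : Y₁Zᵀ − P₂₁ = Y₁ D Zᵀ
  have hstepA : Y₁ * Zᵀ - P.toBlocks₂₁ = Y₁ * D * Zᵀ := by
    rw [hSVD, hDdef, Matrix.mul_sub, Matrix.mul_one, Matrix.sub_mul]
  -- E * F = D
  have hEF : E * F = D := by
    rw [hE, hF, hD, Matrix.diagonal_mul_diagonal]
    refine congrArg Matrix.diagonal (funext fun i => ?_)
    have h0 : 0 ≤ σ i := (hσ i).1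
    have hne : (1 : ℝ) + σ i ≠ 0 := by positivity
    field_simp
    ring
  -- P₂₁ᵀ P₂₁ = Z Σ² Zᵀ and AᵀA = Z E Zᵀ
  have hC : P.toBlocks₂₁ᵀ * P.toBlocks₂₁
      = Z * (Matrix.diagonal σ * Matrix.diagonal σ) * Zᵀ := by
    rw [hSVD]
    simp only [Matrix.transpose_mul, Matrix.transpose_transpose, Matrix.diagonal_transpose,
      Matrix.mul_assoc]
    rw [← Matrix.mul_assoc Y₁ᵀ Y₁, hY, Matrix.one_mul]
  have hAA : Aᵀ * A = Z * E * Zᵀ := by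
    have : Aᵀ * A = 1 - P.toBlocks₂₁ᵀ * P.toBlocks₂₁ := by
      rw [← h1]; abel
    rw [this, hC]
    have hE2 : E = 1 - Matrix.diagonal σ * Matrix.diagonal σ := by
      rw [hE, show (fun i => 1 - σ i ^ 2) = (fun i => 1 - σ i * σ i) from
        funext fun i => by ring, Matrix.diagonal_mul_diagonal,
        ← Matrix.diagonal_one, Matrix.diagonal_sub]
    rw [hE2, Matrix.mul_sub, Matrix.sub_mul, Matrix.mul_one, hZZt]
  -- E = Zᵀ (AᵀA) Z
  have hEeq : E = Zᵀ * (Aᵀ * A) * Z := by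
    rw [hAA]
    calc E = 1 * E * 1 := by rw [Matrix.one_mul, Matrix.mul_one]
      _ = Zᵀ * Z * E * (Zᵀ * Z) := by rw [hZ]
      _ = Zᵀ * (Z * E * Zᵀ) * Z := by simp only [Matrix.mul_assoc]
  -- norm bounds
  have hYn : ‖Y₁‖ ≤ 1 := aux_norm_le_one Y₁ hY
  have hZn : ‖Z‖ ≤ 1 := aux_norm_le_one Z hZ
  have hZtn : ‖Zᵀ‖ ≤ 1 := by
    have := aux_norm_le_one Zᵀ (by rw [Matrix.transpose_transpose]; exact hZZt)
    exact this
  have hFn : ‖F‖ ≤ 1 := by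
    apply aux_diag_norm_le zero_le_one
    intro i
    have h0 : 0 ≤ σ i := (hσ i).1
    rw [abs_of_nonneg (by positivity)]
    rw [inv_le_one_iff₀]
    right
    linarith
  have hAAn : ‖Aᵀ * A‖ = ‖A‖ ^ 2 := by
    have h2 : Aᴴ = Aᵀ := Matrix.conjTranspose_eq_transpose_of_trivial A
    rw [← h2, Matrix.l2_opNorm_conjTranspose_mul_self, sq]
  have hEn : ‖E‖ ≤ ‖A‖ ^ 2 := by
    rw [hEeq]
    calc ‖Zᵀ * (Aᵀ * A) * Z‖ ≤ ‖Zᵀ * (Aᵀ * A)‖ * ‖Z‖ := Matrix.l2_opNorm_mul _ _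
      _ ≤ ‖Zᵀ‖ * ‖Aᵀ * A‖ * ‖Z‖ := by
          have := Matrix.l2_opNorm_mul Zᵀ (Aᵀ * A)
          have hZ0 : (0:ℝ) ≤ ‖Z‖ := norm_nonneg _
          nlinarith [norm_nonneg (Zᵀ * (Aᵀ * A))]
      _ ≤ ‖Aᵀ * A‖ := by
          have h0 : (0:ℝ) ≤ ‖Aᵀ * A‖ := norm_nonneg _
          have t1 : ‖Zᵀ‖ * ‖Aᵀ * A‖ ≤ ‖Aᵀ * A‖ := mul_le_of_le_one_left h0 hZtn
          have t2 : ‖Zᵀ‖ * ‖Aᵀ * A‖ * ‖Z‖ ≤ ‖Zᵀ‖ * ‖Aᵀ * A‖ :=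
            mul_le_of_le_one_right (mul_nonneg (norm_nonneg _) h0) hZn
          linarith
      _ = ‖A‖ ^ 2 := hAAn
  have hDn : ‖D‖ ≤ ‖E‖ := by
    rw [← hEF]
    calc ‖E * F‖ ≤ ‖E‖ * ‖F‖ := Matrix.l2_opNorm_mul _ _
      _ ≤ ‖E‖ := by nlinarith [norm_nonneg E, norm_nonneg F]
  rw [hstepA]
  calc ‖Y₁ * D * Zᵀ‖ ≤ ‖Y₁ * D‖ * ‖Zᵀ‖ := Matrix.l2_opNorm_mul _ _
    _ ≤ ‖Y₁‖ * ‖D‖ * ‖Zᵀ‖ := by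
        have := Matrix.l2_opNorm_mul Y₁ D
        nlinarith [norm_nonneg (Y₁ * D), norm_nonneg Zᵀ]
    _ ≤ ‖D‖ := by
        have h0 : (0:ℝ) ≤ ‖D‖ := norm_nonneg _
        have t1 : ‖Y₁‖ * ‖D‖ ≤ ‖D‖ := mul_le_of_le_one_left h0 hYn
        have t2 : ‖Y₁‖ * ‖D‖ * ‖Zᵀ‖ ≤ ‖Y₁‖ * ‖D‖ :=
          mul_le_of_le_one_right (mul_nonneg (norm_nonneg _) h0) hZtn
        linarith
    _ ≤ ‖A‖ ^ 2 := le_trans hDn hEn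
end

section
/- Let W ∈ ℝ^{n×k} (n ≥ k) have unit-norm columns with orthogonality level ν = ‖SUT(I_k − WᵀW)‖₂ < 1/2, and let W = KΣ₁Jᵀ be its compact SVD with K ∈ ℝ^{n×k} orthonormal columns and J ∈ ℝ^{k×k} orthogonal. Then the orthonormal matrix V̄ = KJᵀ satisfies ‖V̄ − W‖₂ ≤ 1 − (1 − 2ν)^{1/2}. -/
open scoped Matrix.Norms.L2Operator
open Matrix



lemma real_ct {a b : ℕ} (A : Matrix (Fin a) (Fin b) ℝ) : Aᴴ = Aᵀ := by
  ext i j; simp [conjTranspose_apply]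

lemma norm_sq' {a b : ℕ} (A : Matrix (Fin a) (Fin b) ℝ) : ‖Aᵀ * A‖ = ‖A‖ * ‖A‖ := by
  rw [← real_ct]; exact l2_opNorm_conjTranspose_mul_self A

lemma lmul_iso {a b c : ℕ} {K : Matrix (Fin a) (Fin b) ℝ} (hK : Kᵀ * K = 1)
    (A : Matrix (Fin b) (Fin c) ℝ) : ‖K * A‖ = ‖A‖ := by
  have h1 : (K * A)ᵀ * (K * A) = Aᵀ * A := by
    rw [transpose_mul]
    calc Aᵀ * Kᵀ * (K * A) = Aᵀ * (Kᵀ * K) * A := by simp only [Matrix.mul_assoc]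
    _ = Aᵀ * A := by rw [hK, Matrix.mul_one]
  have := norm_sq' (K * A)
  rw [h1, norm_sq'] at this
  nlinarith [norm_nonneg (K * A), norm_nonneg A]

lemma transpose_norm {a b : ℕ} (A : Matrix (Fin a) (Fin b) ℝ) : ‖Aᵀ‖ = ‖A‖ := by
  rw [← real_ct]; exact l2_opNorm_conjTranspose A

lemma rmul_iso {a b c : ℕ} {J : Matrix (Fin b) (Fin c) ℝ} (hJ : J * Jᵀ = 1)
    (A : Matrix (Fin a) (Fin b) ℝ) : ‖A * J‖ = ‖A‖ := by
  rw [← transpose_norm (A * J), transpose_mul, lmul_iso (by rwa [transpose_transpose]),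
    transpose_norm]

lemma diag_norm_le {k : ℕ} {d : Fin k → ℝ} {c : ℝ} (hc : 0 ≤ c)
    (h : ∀ i, |d i| ≤ c) : ‖diagonal d‖ ≤ c := by
  rw [Matrix.l2_opNorm_def]
  apply ContinuousLinearMap.opNorm_le_bound _ hc
  intro x
  have hx : (LinearEquiv.trans toEuclideanLin LinearMap.toContinuousLinearMap (diagonal d)) x
      = (WithLp.equiv 2 _).symm (diagonal d *ᵥ WithLp.equiv 2 _ x) := by
    rw [LinearEquiv.trans_apply]
    rw [LinearMap.coe_toContinuousLinearMap']
    rw [Matrix.toEuclideanLin_apply]; rfl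
  rw [hx]
  rw [EuclideanSpace.norm_eq]
  have h2 : ‖x‖ = Real.sqrt (∑ i, ‖x i‖ ^ 2) := EuclideanSpace.norm_eq x
  rw [h2, ← Real.sqrt_sq hc, ← Real.sqrt_mul (sq_nonneg c), Finset.mul_sum]
  apply Real.sqrt_le_sqrt
  apply Finset.sum_le_sum
  intro i _
  have hcoord : ((WithLp.equiv 2 _).symm (diagonal d *ᵥ WithLp.equiv 2 _ x) : EuclideanSpace ℝ (Fin k)) i
      = d i * x i := by
    rw [show ((WithLp.equiv 2 _).symm (diagonal d *ᵥ WithLp.equiv 2 _ x) : EuclideanSpace ℝ (Fin k)) i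
        = (diagonal d *ᵥ WithLp.equiv 2 _ x) i from rfl, Matrix.mulVec_diagonal]
    rfl
  rw [hcoord]
  have h3 : ‖d i * x i‖ ^ 2 = (d i)^2 * ‖x i‖^2 := by
    rw [norm_mul, mul_pow]; congr 1; rw [Real.norm_eq_abs, sq_abs]
  rw [h3]
  have h4 : (d i)^2 ≤ c^2 := by nlinarith [le_abs_self (d i), neg_abs_le (d i), h i, abs_nonneg (d i)]
  nlinarith [sq_nonneg (‖x i‖)]

lemma diag_norm_ge {k : ℕ} (d : Fin k → ℝ) (i : Fin k) : |d i| ≤ ‖diagonal d‖ := by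
  have h := Matrix.l2_opNorm_mulVec (diagonal d) (EuclideanSpace.single i 1)
  rw [EuclideanSpace.norm_single] at h
  have hx : (EuclideanSpace.equiv (Fin k) ℝ).symm (diagonal d *ᵥ (EuclideanSpace.single i 1))
      = EuclideanSpace.single i (d i) := by
    ext j
    rw [EuclideanSpace.single_apply]
    have h0 : ((EuclideanSpace.equiv (Fin k) ℝ).symm (diagonal d *ᵥ (EuclideanSpace.single i 1))) j
        = (diagonal d *ᵥ (EuclideanSpace.single i 1)) j := rfl
    rw [h0, Matrix.mulVec_diagonal]
    have : (EuclideanSpace.single i (1:ℝ)) j = if j = i then 1 else 0 :=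
      EuclideanSpace.single_apply i 1 j
    rw [this]
    by_cases hji : j = i <;> simp [hji]
  rw [hx, EuclideanSpace.norm_single] at h
  simpa using h

/-- If `W` has unit columns with orthogonality level `ν < 1/2` and compact SVD
`W = KΣ₁Jᵀ`, then the orthonormal matrix `V̄ = KJᵀ` satisfies
`‖V̄ − W‖₂ ≤ 1 − (1 − 2ν)^{1/2}`. -/
theorem stmt11 {n k : ℕ} (hnk : k ≤ n) (W : Matrix (Fin n) (Fin k) ℝ)
    (hcols : ∀ j, ∑ i, (W i j) ^ 2 = 1)
    (ν : ℝ) (hν : ν = ‖SUT (1 - Wᵀ * W)‖) (hν2 : ν < 1 / 2)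
    (K : Matrix (Fin n) (Fin k) ℝ) (hK : Kᵀ * K = 1)
    (J : Matrix (Fin k) (Fin k) ℝ) (hJ : Jᵀ * J = 1)
    (σ : Fin k → ℝ) (hσ : ∀ i, 0 ≤ σ i)
    (hSVD : W = K * Matrix.diagonal σ * Jᵀ) :
    ‖K * Jᵀ - W‖ ≤ 1 - Real.sqrt (1 - 2 * ν) := by
  have hν0 : 0 ≤ ν := hν ▸ norm_nonneg _
  have h12 : (0:ℝ) ≤ 1 - 2 * ν := by linarith
  have hs1 : Real.sqrt (1 - 2 * ν) ≤ 1 := by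
    have := Real.sqrt_le_sqrt (show 1 - 2 * ν ≤ 1 by linarith)
    simpa using this
  have hc0 : (0:ℝ) ≤ 1 - Real.sqrt (1 - 2 * ν) := by linarith
  set M := (1 : Matrix (Fin k) (Fin k) ℝ) - Wᵀ * W with hM
  have hMsymm : Mᵀ = M := by
    rw [hM, transpose_sub, transpose_one, transpose_mul, transpose_transpose]
  have hMdiag : ∀ j, M j j = 0 := by
    intro j
    have h1 : (Wᵀ * W) j j = ∑ i, (W i j) ^ 2 := by
      simp [Matrix.mul_apply, sq]
    simp [hM, Matrix.sub_apply, one_apply, h1, hcols j]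
  have hdecomp : M = SUT M + (SUT M)ᵀ := by
    ext i j
    simp only [Matrix.add_apply, transpose_apply, SUT, of_apply]
    rcases lt_trichotomy i j with h | h | h
    · simp [h, not_lt.mpr h.le]
    · simp [h, lt_irrefl, hMdiag j]
    · have hMji : M j i = M i j := by
        have := congrFun (congrFun hMsymm j) i
        simpa [transpose_apply] using this.symm
      simp [h, not_lt.mpr h.le, hMji]
  have hMnorm : ‖M‖ ≤ 2 * ν := by
    calc ‖M‖ = ‖SUT M + (SUT M)ᵀ‖ := by rw [← hdecomp]
    _ ≤ ‖SUT M‖ + ‖(SUT M)ᵀ‖ := norm_add_le _ _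
    _ = ν + ν := by rw [transpose_norm, ← hν]
    _ = 2 * ν := by ring
  have hJJt : J * Jᵀ = 1 := mul_eq_one_comm.mp hJ
  have hWtW : Wᵀ * W = J * diagonal (fun i => σ i * σ i) * Jᵀ := by
    rw [hSVD]
    have h2 : (K * diagonal σ * Jᵀ)ᵀ * (K * diagonal σ * Jᵀ)
        = J * (diagonal σ * ((Kᵀ * K) * (diagonal σ * Jᵀ))) := by
      simp only [transpose_mul, transpose_transpose, diagonal_transpose, Matrix.mul_assoc]
    rw [h2, hK, Matrix.one_mul, ← Matrix.mul_assoc (diagonal σ), diagonal_mul_diagonal]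
    simp only [Matrix.mul_assoc]
  have hdiagsub : diagonal (fun i => 1 - σ i * σ i)
      = 1 - diagonal (fun i => σ i * σ i) := by
    rw [← diagonal_one, diagonal_sub]
  have hMeq : M = J * diagonal (fun i => 1 - σ i * σ i) * Jᵀ := by
    rw [hdiagsub, hM, hWtW, Matrix.mul_sub, Matrix.mul_one, Matrix.sub_mul, hJJt]
  have hdiagnorm : ‖diagonal (fun i => 1 - σ i * σ i)‖ = ‖M‖ := by
    have h3 : Jᵀ * (M * J) = diagonal (fun i => 1 - σ i * σ i) := by
      rw [hMeq]
      simp only [← Matrix.mul_assoc]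
      rw [hJ, Matrix.one_mul, Matrix.mul_assoc, hJ, Matrix.mul_one]
    rw [← h3, lmul_iso (by rwa [transpose_transpose]), rmul_iso hJJt]
  have hσbound : ∀ i, |1 - σ i * σ i| ≤ 2 * ν := fun i =>
    (diag_norm_ge _ i).trans (hdiagnorm ▸ hMnorm)
  have hfin : ∀ i, |1 - σ i| ≤ 1 - Real.sqrt (1 - 2 * ν) := by
    intro i
    have h1 := hσbound i
    have hs := hσ i
    have hsq : Real.sqrt (1 - 2 * ν) ^ 2 = 1 - 2 * ν := Real.sq_sqrt h12
    have hsn : 0 ≤ Real.sqrt (1 - 2 * ν) := Real.sqrt_nonneg _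
    rw [abs_le] at h1 ⊢
    constructor
    · -- σ i ≤ 2 - √(1-2ν)
      nlinarith [h1.1, h1.2, sq_nonneg ν, sq_nonneg (σ i - 1), sq_nonneg (σ i + Real.sqrt (1 - 2*ν) - 2)]
    · -- √(1-2ν) ≤ σ i
      have hle : Real.sqrt (1 - 2 * ν) ≤ σ i := by
        have h4 : 1 - 2 * ν ≤ (σ i) ^ 2 := by nlinarith [h1.2]
        calc Real.sqrt (1 - 2 * ν) ≤ Real.sqrt ((σ i) ^ 2) := Real.sqrt_le_sqrt h4
        _ = σ i := Real.sqrt_sq hs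
      linarith
  have hfactor : K * Jᵀ - W = K * diagonal (fun i => 1 - σ i) * Jᵀ := by
    rw [hSVD]
    have h5 : diagonal (fun i => 1 - σ i) = 1 - diagonal σ := by
      rw [← diagonal_one, diagonal_sub]
    rw [h5, Matrix.mul_sub, Matrix.mul_one, Matrix.sub_mul]
  rw [hfactor, rmul_iso (show Jᵀ * Jᵀᵀ = 1 by rwa [transpose_transpose]), lmul_iso hK]
  exact diag_norm_le hc0 hfin
end

section
/- Let U ∈ ℝ^{m×k} (m ≥ k) have unit-norm columns with orthogonality level μ = ‖SUT(I_k − UᵀU)‖₂ < 1/2, and let f ∈ ℝ^m, w ∈ ℝ^k satisfy Uw = f. Then ‖w‖₂ ≤ (1 − 2μ)^{-1/2} ‖f‖₂. -/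
open scoped Matrix.Norms.L2Operator
open Matrix

/-- The Euclidean norm of a finite real vector. -/
noncomputable def enorm' {d : ℕ} (x : Fin d → ℝ) : ℝ := Real.sqrt (∑ i, x i ^ 2)

lemma enorm_eq {d : ℕ} (x : Fin d → ℝ) :
    enorm' x = ‖(EuclideanSpace.equiv (Fin d) ℝ).symm x‖ := by
  rw [EuclideanSpace.norm_eq, enorm']
  congr 1
  exact Finset.sum_congr rfl fun i _ => by simp [Real.norm_eq_abs, sq_abs, EuclideanSpace.equiv]

/-- If `U` has unit columns with orthogonality level `μ < 1/2` and `Uw = f`,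
then `‖w‖₂ ≤ (1 − 2μ)^{-1/2}‖f‖₂`. -/
theorem stmt19 {m k : ℕ} (hmk : k ≤ m) (U : Matrix (Fin m) (Fin k) ℝ)
    (hcols : ∀ j, ∑ i, (U i j) ^ 2 = 1)
    (μ : ℝ) (hμ : μ = ‖SUT (1 - Uᵀ * U)‖) (hμ2 : μ < 1 / 2)
    (f : Fin m → ℝ) (w : Fin k → ℝ) (h : U.mulVec w = f) :
    enorm' w ≤ (Real.sqrt (1 - 2 * μ))⁻¹ * enorm' f := by
  set T := SUT (1 - Uᵀ * U) with hT
  have hμ0 : 0 ≤ μ := hμ ▸ norm_nonneg _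
  have hpos : (0:ℝ) < 1 - 2 * μ := by linarith
  -- decomposition: 1 - UᵀU = T + Tᵀ
  have hdecomp : (1 : Matrix (Fin k) (Fin k) ℝ) - Uᵀ * U = T + Tᵀ := by
    ext i j
    have hdiag : ∀ i, ((1 : Matrix (Fin k) (Fin k) ℝ) - Uᵀ * U) i i = 0 := by
      intro i
      simp [Matrix.sub_apply, Matrix.mul_apply, Matrix.one_apply, ← hcols i, sq]
    have hsymm : (Uᵀ * U) j i = (Uᵀ * U) i j := by
      simp [Matrix.mul_apply, mul_comm]
    have hone : (1 : Matrix (Fin k) (Fin k) ℝ) i j = (1 : Matrix (Fin k) (Fin k) ℝ) j i := by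
      simp [Matrix.one_apply, eq_comm]
    rcases lt_trichotomy i j with hij | hij | hij
    · simp [hT, SUT, Matrix.add_apply, Matrix.transpose_apply, hij, not_lt_of_gt hij]
    · subst hij; simp [hT, SUT, Matrix.add_apply, Matrix.transpose_apply, hdiag i]
    · simp [hT, SUT, Matrix.add_apply, Matrix.transpose_apply, hij, not_lt_of_gt hij, hsymm,
        hone]
  have h2 : (Uᵀ * U : Matrix (Fin k) (Fin k) ℝ) = 1 - (T + Tᵀ) := by
    rw [← hdecomp]; abel
  -- quadratic form identity
  have hTT : w ⬝ᵥ Tᵀ *ᵥ w = w ⬝ᵥ T *ᵥ w := by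
    rw [Matrix.dotProduct_mulVec, Matrix.vecMul_transpose, dotProduct_comm]
  have hff : f ⬝ᵥ f = w ⬝ᵥ w - 2 * (w ⬝ᵥ T *ᵥ w) := by
    have h1 : f ⬝ᵥ f = w ⬝ᵥ (Uᵀ * U) *ᵥ w := by
      rw [← Matrix.mulVec_mulVec, Matrix.dotProduct_mulVec, Matrix.vecMul_transpose, h]
    rw [h1, h2, Matrix.sub_mulVec, Matrix.add_mulVec, Matrix.one_mulVec,
      dotProduct_sub, dotProduct_add, hTT]
    ring
  -- Cauchy–Schwarz and operator norm bound
  have hb : |w ⬝ᵥ T *ᵥ w| ≤ μ * enorm' w ^ 2 := by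
    set ew : EuclideanSpace ℝ (Fin k) := (EuclideanSpace.equiv (Fin k) ℝ).symm w with hew
    set eTw : EuclideanSpace ℝ (Fin k) := (EuclideanSpace.equiv (Fin k) ℝ).symm (T *ᵥ w)
      with heTw
    have hcs : |w ⬝ᵥ T *ᵥ w| ≤ ‖ew‖ * ‖eTw‖ := by
      have := abs_real_inner_le_norm ew eTw
      simpa [hew, heTw, PiLp.inner_apply, RCLike.inner_apply, dotProduct, mul_comm] using this
    have hop : ‖eTw‖ ≤ μ * ‖ew‖ := by
      have := Matrix.l2_opNorm_mulVec T ew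
      rw [hμ]; exact this
    calc |w ⬝ᵥ T *ᵥ w| ≤ ‖ew‖ * ‖eTw‖ := hcs
      _ ≤ ‖ew‖ * (μ * ‖ew‖) := mul_le_mul_of_nonneg_left hop (norm_nonneg _)
      _ = μ * enorm' w ^ 2 := by rw [enorm_eq]; ring
  have hw2 : w ⬝ᵥ w = enorm' w ^ 2 := by
    rw [enorm', Real.sq_sqrt (Finset.sum_nonneg fun i _ => sq_nonneg _)]
    simp [dotProduct, sq]
  have hf2 : f ⬝ᵥ f = enorm' f ^ 2 := by
    rw [enorm', Real.sq_sqrt (Finset.sum_nonneg fun i _ => sq_nonneg _)]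
    simp [dotProduct, sq]
  have key : (1 - 2 * μ) * enorm' w ^ 2 ≤ enorm' f ^ 2 := by
    have := abs_le.mp hb
    nlinarith [hff, hw2, hf2]
  have hs : (0:ℝ) < Real.sqrt (1 - 2 * μ) := Real.sqrt_pos.mpr hpos
  have hewnn : 0 ≤ enorm' w := Real.sqrt_nonneg _
  have hefnn : 0 ≤ enorm' f := Real.sqrt_nonneg _
  rw [← div_eq_inv_mul, le_div_iff₀ hs]
  nlinarith [key, Real.sq_sqrt hpos.le, hefnn, mul_nonneg hewnn hs.le,
    sq_nonneg (enorm' w * Real.sqrt (1 - 2 * μ) - enorm' f),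
    sq_nonneg (enorm' w * Real.sqrt (1 - 2 * μ) + enorm' f)]
end
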